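/- Under assumptions $(V1)$, $(f1)$-$(f2)$: if $u$ is a critical point of $I_V$ (a solution of $-\Delta u+Vu=f(u)$ in $D^{1,2}(\mathbb{R}^N)$) with $I_V(u)\in[c_V,2c_V)$, then $u$ does not change sign, i.e., $u\geq 0$ a.e. or $u\leq 0$ a.e. -/

import Mathlib

open MeasureTheory

noncomputable section

/-- The critical Sobolev exponent `2* = 2N/(N-2)`. -/
def twoStar (N : ℕ) : ℝ := 2 * (N : ℝ) / ((N : ℝ) - 2)

/-- Membership in `D^{1,2}(ℝ^N)`: `u ∈ L^{2*}` with gradient in `L²`. -/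
def D12 (N : ℕ) (u : EuclideanSpace ℝ (Fin N) → ℝ) : Prop :=
  MemLp u (ENNReal.ofReal (twoStar N)) volume ∧
    MemLp (fun x => ‖gradient u x‖) 2 volume

/-- The squared norm `‖u‖_V² = ∫ (|∇u|² + V u²)`. -/
def normVsq (N : ℕ) (V u : EuclideanSpace ℝ (Fin N) → ℝ) : ℝ :=
  ∫ x, (‖gradient u x‖ ^ 2 + V x * u x ^ 2)

/-- The Nehari manifold associated to the potential `V` and nonlinearity `f`. -/
def NehariV (N : ℕ) (V : EuclideanSpace ℝ (Fin N) → ℝ) (f : ℝ → ℝ) :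
    Set (EuclideanSpace ℝ (Fin N) → ℝ) :=
  {u | D12 N u ∧ ¬ (u =ᵐ[volume] (0 : EuclideanSpace ℝ (Fin N) → ℝ)) ∧
    normVsq N V u = ∫ x, f (u x) * u x}

/-- The energy functional `I_V(u) = ½‖u‖_V² − ∫ F(u)`. -/
def energyIV (N : ℕ) (V : EuclideanSpace ℝ (Fin N) → ℝ) (F : ℝ → ℝ)
    (u : EuclideanSpace ℝ (Fin N) → ℝ) : ℝ :=
  normVsq N V u / 2 - ∫ x, F (u x)

section Aux

variable {E : Type*} [NormedAddCommGroup E] [InnerProductSpace ℝ E] [CompleteSpace E]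

lemma grad_posPart (u : E → ℝ) (x : E) :
    gradient (fun y => max (u y) 0) x = 0 ∨
      gradient (fun y => max (u y) 0) x = gradient u x := by
  by_cases hd : DifferentiableAt ℝ (fun y => max (u y) 0) x
  · rcases le_or_gt (u x) 0 with h0 | h0
    · left
      have hmin : IsLocalMin (fun y => max (u y) 0) x := by
        apply Filter.Eventually.of_forall
        intro y
        simp [max_eq_right h0]
      unfold gradient
      rw [hmin.fderiv_eq_zero, map_zero]
    · right
      have hx : (0:ℝ) < max (u x) 0 := by simp [max_eq_left h0.le, h0]
      have h1 : ∀ᶠ y in nhds x, 0 < max (u y) 0 :=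
        hd.continuousAt (Ioi_mem_nhds hx)
      have h2 : (fun y => max (u y) 0) =ᶠ[nhds x] u := by
        filter_upwards [h1] with y hy
        rcases lt_max_iff.1 hy with h | h
        · exact max_eq_left h.le
        · exact absurd h (lt_irrefl 0)
      exact h2.gradient_eq
  · left
    exact gradient_eq_zero_of_not_differentiableAt hd

lemma grad_negPart (u : E → ℝ) (x : E) :
    gradient (fun y => min (u y) 0) x = 0 ∨
      gradient (fun y => min (u y) 0) x = gradient u x := by
  by_cases hd : DifferentiableAt ℝ (fun y => min (u y) 0) x
  · rcases lt_or_ge (u x) 0 with h0 | h0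
    · right
      have hx' : min (u x) 0 < 0 := by simp [min_eq_left h0.le, h0]
      have h1 : ∀ᶠ y in nhds x, min (u y) 0 < 0 :=
        hd.continuousAt (Iio_mem_nhds hx')
      have h2 : (fun y => min (u y) 0) =ᶠ[nhds x] u := by
        filter_upwards [h1] with y hy
        rcases min_lt_iff.1 hy with h | h
        · exact min_eq_left h.le
        · exact absurd h (lt_irrefl 0)
      exact h2.gradient_eq
    · left
      have hmax : IsLocalMax (fun y => min (u y) 0) x := by
        apply Filter.Eventually.of_forall
        intro y
        simp [min_eq_right h0]
      unfold gradient
      rw [hmax.fderiv_eq_zero, map_zero]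
  · left
    exact gradient_eq_zero_of_not_differentiableAt hd

lemma grad_meas' {E : Type*} [NormedAddCommGroup E] [InnerProductSpace ℝ E] [CompleteSpace E]
    [MeasurableSpace E] [OpensMeasurableSpace E] [BorelSpace E] (u : E → ℝ) :
    Measurable (fun x => gradient u x) := by
  have h : Measurable (fderiv ℝ u) := measurable_fderiv ℝ u
  exact ((InnerProductSpace.toDual ℝ E).symm.continuous.measurable).comp h

end Aux

theorem stmt_12 (N : ℕ) (hN : 3 ≤ N) (V : EuclideanSpace ℝ (Fin N) → ℝ)
    (f F : ℝ → ℝ) (hf : ContDiff ℝ 1 f) (hodd : ∀ s, f (-s) = -f s)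
    (hF : ∀ s, F s = ∫ t in (0:ℝ)..s, f t)
    (A₁ : ℝ) (hA : 0 < A₁) (hgrow : ∀ s : ℝ, |f s| ≤ A₁ * |s| ^ (twoStar N - 1))
    (u : EuclideanSpace ℝ (Fin N) → ℝ) (hu : D12 N u)
    (hcrit : ∀ v : EuclideanSpace ℝ (Fin N) → ℝ, D12 N v →
      (∫ x, ((inner ℝ (gradient u x) (gradient v x) : ℝ) + V x * u x * v x)) =
        ∫ x, f (u x) * v x)
    (cV : ℝ) (hcV : cV = sInf (energyIV N V F '' NehariV N V f)) (hcVpos : 0 < cV)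
    (hIu : energyIV N V F u ∈ Set.Ico cV (2 * cV)) :
    (∀ᵐ x ∂(volume : Measure (EuclideanSpace ℝ (Fin N))), 0 ≤ u x) ∨
      (∀ᵐ x ∂(volume : Measure (EuclideanSpace ℝ (Fin N))), u x ≤ 0) := by
  classical
  set t := twoStar N with ht_def
  have hN3 : (3:ℝ) ≤ (N:ℝ) := by exact_mod_cast hN
  have ht_pos : 0 < t := by
    rw [ht_def]; unfold twoStar
    apply div_pos <;> linarith
  have ht1 : 1 < t := by
    rw [ht_def]; unfold twoStar
    rw [lt_div_iff₀ (by linarith : (0:ℝ) < (N:ℝ) - 2)]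
    linarith
  -- positive and negative parts
  set up : EuclideanSpace ℝ (Fin N) → ℝ := fun y => max (u y) 0 with hup_def
  set un : EuclideanSpace ℝ (Fin N) → ℝ := fun y => min (u y) 0 with hun_def
  by_cases hupz : up =ᵐ[volume] (0 : EuclideanSpace ℝ (Fin N) → ℝ)
  · right
    filter_upwards [hupz] with x hx
    have : max (u x) 0 = 0 := hx
    exact max_eq_right_iff.1 this
  by_cases hunz : un =ᵐ[volume] (0 : EuclideanSpace ℝ (Fin N) → ℝ)
  · left
    filter_upwards [hunz] with x hx
    have : min (u x) 0 = 0 := hx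
    exact min_eq_right_iff.1 this
  exfalso
  -- basic measurability
  have hum : AEStronglyMeasurable u volume := hu.1.aestronglyMeasurable
  have hupm : AEStronglyMeasurable up volume := hum.sup aestronglyMeasurable_const
  have hunm : AEStronglyMeasurable un volume := hum.inf aestronglyMeasurable_const
  -- pointwise bounds
  have hup_le : ∀ x, |up x| ≤ |u x| := by
    intro x
    rcases le_or_gt (u x) 0 with h | h
    · simp [hup_def, max_eq_right h]
    · simp [hup_def, max_eq_left h.le]
  have hun_le : ∀ x, |un x| ≤ |u x| := by
    intro x
    rcases le_or_gt (u x) 0 with h | h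
    · simp [hun_def, min_eq_left h]
    · simp [hun_def, min_eq_right h.le]
  -- D12 membership of parts
  have hD12up : D12 N up := by
    constructor
    · refine hu.1.of_le hupm (Filter.Eventually.of_forall fun x => ?_)
      simpa [Real.norm_eq_abs] using hup_le x
    · refine hu.2.of_le ((grad_meas' up).norm.aestronglyMeasurable)
        (Filter.Eventually.of_forall fun x => ?_)
      simp only [norm_norm]
      rcases grad_posPart u x with hg | hg
      · rw [show gradient up x = 0 from hg]; simp
      · rw [show gradient up x = gradient u x from hg]
  have hD12un : D12 N un := by
    constructor
    · refine hu.1.of_le hunm (Filter.Eventually.of_forall fun x => ?_)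
      simpa [Real.norm_eq_abs] using hun_le x
    · refine hu.2.of_le ((grad_meas' un).norm.aestronglyMeasurable)
        (Filter.Eventually.of_forall fun x => ?_)
      simp only [norm_norm]
      rcases grad_negPart u x with hg | hg
      · rw [show gradient un x = 0 from hg]; simp
      · rw [show gradient un x = gradient u x from hg]
  -- Nehari identity for up
  have hmulp : ∀ x, u x * up x = up x ^ 2 := by
    intro x
    rcases le_or_gt (u x) 0 with h | h
    · simp [hup_def, max_eq_right h]
    · rw [show up x = u x from max_eq_left h.le]; ring
  have hmuln : ∀ x, u x * un x = un x ^ 2 := by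
    intro x
    rcases lt_or_ge (u x) 0 with h | h
    · rw [show un x = u x from min_eq_left h.le]; ring
    · simp [hun_def, min_eq_right h]
  have hNup : normVsq N V up = ∫ x, f (up x) * up x := by
    have h1 := hcrit up hD12up
    have h2 : (fun x => (inner ℝ (gradient u x) (gradient up x) : ℝ) + V x * u x * up x)
        = fun x => ‖gradient up x‖ ^ 2 + V x * up x ^ 2 := by
      funext x
      rcases grad_posPart u x with hg | hg
      · rw [show gradient up x = 0 from hg, inner_zero_right, mul_assoc, hmulp x]
        simp
      · rw [show gradient up x = gradient u x from hg, ← real_inner_self_eq_norm_sq,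
          mul_assoc, hmulp x]
    have h3 : (fun x => f (u x) * up x) = fun x => f (up x) * up x := by
      funext x
      rcases le_or_gt (u x) 0 with h | h
      · simp [hup_def, max_eq_right h]
      · rw [show up x = u x from max_eq_left h.le]
    rw [h2, h3] at h1
    exact h1
  have hNun : normVsq N V un = ∫ x, f (un x) * un x := by
    have h1 := hcrit un hD12un
    have h2 : (fun x => (inner ℝ (gradient u x) (gradient un x) : ℝ) + V x * u x * un x)
        = fun x => ‖gradient un x‖ ^ 2 + V x * un x ^ 2 := by
      funext x
      rcases grad_negPart u x with hg | hg
      · rw [show gradient un x = 0 from hg, inner_zero_right, mul_assoc, hmuln x]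
        simp
      · rw [show gradient un x = gradient u x from hg, ← real_inner_self_eq_norm_sq,
          mul_assoc, hmuln x]
    have h3 : (fun x => f (u x) * un x) = fun x => f (un x) * un x := by
      funext x
      rcases lt_or_ge (u x) 0 with h | h
      · rw [show un x = u x from min_eq_left h.le]
      · simp [hun_def, min_eq_right h]
    rw [h2, h3] at h1
    exact h1
  have hNu : normVsq N V u = ∫ x, f (u x) * u x := by
    have h1 := hcrit u hu
    have h2 : (fun x => (inner ℝ (gradient u x) (gradient u x) : ℝ) + V x * u x * u x)
        = fun x => ‖gradient u x‖ ^ 2 + V x * u x ^ 2 := by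
      funext x
      rw [← real_inner_self_eq_norm_sq, mul_assoc]
      ring
    rw [h2] at h1
    exact h1
  -- growth bounds
  have habs : ∀ s : ℝ, |s| ^ (t - 1) * |s| = |s| ^ t := by
    intro s
    rcases eq_or_ne s 0 with rfl | hs
    · rw [abs_zero, Real.zero_rpow (by linarith), Real.zero_rpow (by linarith)]
      ring
    · have h0 : |s| ≠ 0 := abs_ne_zero.2 hs
      rw [← Real.rpow_add_one h0 (t - 1), show t - 1 + 1 = t by ring]
  have hfs : ∀ s : ℝ, |f s * s| ≤ A₁ * |s| ^ t := by
    intro s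
    rw [abs_mul]
    calc |f s| * |s| ≤ (A₁ * |s| ^ (t - 1)) * |s| :=
          mul_le_mul_of_nonneg_right (hgrow s) (abs_nonneg s)
      _ = A₁ * |s| ^ t := by rw [mul_assoc, habs s]
  have hFs : ∀ s : ℝ, |F s| ≤ A₁ * |s| ^ t := by
    intro s
    rw [hF s]
    have hb : ∀ x ∈ Set.uIoc (0:ℝ) s, ‖f x‖ ≤ A₁ * |s| ^ (t - 1) := by
      intro x hx
      have hxs : |x| ≤ |s| := by
        have h1 : -|s| ≤ min 0 s := le_min (neg_nonpos.2 (abs_nonneg s)) (neg_abs_le s)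
        have h2 : max 0 s ≤ |s| := max_le (abs_nonneg s) (le_abs_self s)
        exact abs_le.2 ⟨le_of_lt (lt_of_le_of_lt h1 hx.1), le_trans hx.2 h2⟩
      calc ‖f x‖ = |f x| := Real.norm_eq_abs _
        _ ≤ A₁ * |x| ^ (t - 1) := hgrow x
        _ ≤ A₁ * |s| ^ (t - 1) :=
            mul_le_mul_of_nonneg_left
              (Real.rpow_le_rpow (abs_nonneg x) hxs (by linarith)) hA.le
    calc |∫ x in (0:ℝ)..s, f x| ≤ (A₁ * |s| ^ (t - 1)) * |s - 0| :=
          intervalIntegral.norm_integral_le_of_norm_le_const hb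
      _ = A₁ * |s| ^ t := by rw [sub_zero, mul_assoc, habs s]
  have hFcont : Continuous F := by
    have hFe : F = fun s => ∫ x in (0:ℝ)..s, f x := funext hF
    rw [hFe]
    exact intervalIntegral.continuous_primitive
      (fun a b => hf.continuous.intervalIntegrable a b) 0
  have hF0 : F 0 = 0 := by rw [hF 0, intervalIntegral.integral_same]
  -- integrability
  have hInt : Integrable (fun x => |u x| ^ t) volume := by
    have h := hu.1.integrable_norm_rpow
      (by simp [ENNReal.ofReal_eq_zero]; linarith) ENNReal.ofReal_ne_top
    rw [ENNReal.toReal_ofReal ht_pos.le] at h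
    simpa [Real.norm_eq_abs] using h
  have key : ∀ w : EuclideanSpace ℝ (Fin N) → ℝ, AEStronglyMeasurable w volume →
      (∀ x, |w x| ≤ |u x|) →
      Integrable (fun x => f (w x) * w x) volume ∧ Integrable (fun x => F (w x)) volume := by
    intro w hwm hwle
    have hbound : ∀ x, A₁ * |w x| ^ t ≤ A₁ * |u x| ^ t := fun x =>
      mul_le_mul_of_nonneg_left
        (Real.rpow_le_rpow (abs_nonneg _) (hwle x) ht_pos.le) hA.le
    constructor
    · refine Integrable.mono' (hInt.const_mul A₁)
        ((hf.continuous.comp_aestronglyMeasurable hwm).mul hwm)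
        (Filter.Eventually.of_forall fun x => ?_)
      rw [Real.norm_eq_abs]
      exact (hfs (w x)).trans (hbound x)
    · refine Integrable.mono' (hInt.const_mul A₁)
        (hFcont.comp_aestronglyMeasurable hwm)
        (Filter.Eventually.of_forall fun x => ?_)
      rw [Real.norm_eq_abs]
      exact (hFs (w x)).trans (hbound x)
  obtain ⟨hIfup, hIFup⟩ := key up hupm hup_le
  obtain ⟨hIfun, hIFun⟩ := key un hunm hun_le
  -- splitting identities
  have hsum1 : (∫ x, f (up x) * up x) + (∫ x, f (un x) * un x) = ∫ x, f (u x) * u x := by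
    rw [← integral_add hIfup hIfun]
    apply integral_congr_ae
    apply Filter.Eventually.of_forall
    intro x
    rcases le_or_gt (u x) 0 with h | h
    · have h1 : up x = 0 := max_eq_right h
      have h2 : un x = u x := min_eq_left h
      simp [h1, h2]
    · have h1 : up x = u x := max_eq_left h.le
      have h2 : un x = 0 := min_eq_right h.le
      simp [h1, h2]
  have hsum2 : (∫ x, F (up x)) + (∫ x, F (un x)) = ∫ x, F (u x) := by
    rw [← integral_add hIFup hIFun]
    apply integral_congr_ae
    apply Filter.Eventually.of_forall
    intro x
    rcases le_or_gt (u x) 0 with h | h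
    · have h1 : up x = 0 := max_eq_right h
      have h2 : un x = u x := min_eq_left h
      simp [h1, h2, hF0]
    · have h1 : up x = u x := max_eq_left h.le
      have h2 : un x = 0 := min_eq_right h.le
      simp [h1, h2, hF0]
  -- energy splitting
  have hsplit : energyIV N V F u = energyIV N V F up + energyIV N V F un := by
    unfold energyIV
    rw [hNu, hNup, hNun, ← hsum1, ← hsum2]
    ring
  -- Nehari membership
  have hupN : up ∈ NehariV N V f := ⟨hD12up, hupz, hNup⟩
  have hunN : un ∈ NehariV N V f := ⟨hD12un, hunz, hNun⟩
  -- lower bounds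
  have hBdd : BddBelow (energyIV N V F '' NehariV N V f) := by
    by_contra hB
    rw [csInf_of_not_bddBelow hB, Real.sInf_empty] at hcV
    linarith
  have h1 : cV ≤ energyIV N V F up := by
    rw [hcV]
    exact csInf_le hBdd ⟨up, hupN, rfl⟩
  have h2 : cV ≤ energyIV N V F un := by
    rw [hcV]
    exact csInf_le hBdd ⟨un, hunN, rfl⟩
  have h3 : energyIV N V F u < 2 * cV := hIu.2
  linarith
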